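/- arXiv:2604.19611 — 4 statements merged into one kernel-verified Lean document; each statement's English description precedes it below -/
import Mathlib

section
/- Let V be a real vector space, x a seminorm on V, and α, β ∈ V with x(α) > 0 and x(β) > 0. Then x(α+β) = x(α) + x(β) if and only if every point of the segment joining α/x(α) to β/x(β) has seminorm exactly 1; that is, if and only if for every t ∈ [0,1] one has x( t·(x(α))⁻¹·α + (1−t)·(x(β))⁻¹·β ) = 1. -/
/-- Additivity of a seminorm at `α` and `β` (with positive seminorms) is equivalent to
the whole segment between the normalizations `α / x α` and `β / x β` lying on the
boundary `{v | x v = 1}` of the unit ball. -/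
theorem seminorm_add_eq_iff_segment_on_sphere
    {V : Type*} [AddCommGroup V] [Module ℝ V] (x : Seminorm ℝ V) (α β : V)
    (hα : 0 < x α) (hβ : 0 < x β) :
    x (α + β) = x α + x β ↔
      ∀ t : ℝ, t ∈ Set.Icc (0 : ℝ) 1 →
        x (t • (x α)⁻¹ • α + (1 - t) • (x β)⁻¹ • β) = 1 := by
  have ha : (x α) ≠ 0 := ne_of_gt hα
  have hb : (x β) ≠ 0 := ne_of_gt hβ
  constructor
  · intro h t ht
    obtain ⟨ht0, ht1⟩ := ht
    set c : ℝ := t * (x α)⁻¹ with hc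
    set d : ℝ := (1 - t) * (x β)⁻¹ with hd
    have hc0 : 0 ≤ c := mul_nonneg ht0 (inv_nonneg.2 hα.le)
    have hd0 : 0 ≤ d := mul_nonneg (by linarith) (inv_nonneg.2 hβ.le)
    have hca : c * x α = t := by rw [hc, mul_assoc, inv_mul_cancel₀ ha, mul_one]
    have hdb : d * x β = 1 - t := by rw [hd, mul_assoc, inv_mul_cancel₀ hb, mul_one]
    have hv : t • (x α)⁻¹ • α + (1 - t) • (x β)⁻¹ • β = c • α + d • β := by
      rw [hc, hd, smul_smul, smul_smul]
    rw [hv]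
    have hub : x (c • α + d • β) ≤ 1 := by
      calc x (c • α + d • β) ≤ x (c • α) + x (d • β) := map_add_le_add x _ _
        _ = c * x α + d * x β := by
            rw [map_smul_eq_mul, map_smul_eq_mul, Real.norm_eq_abs, Real.norm_eq_abs,
              abs_of_nonneg hc0, abs_of_nonneg hd0]
        _ = 1 := by rw [hca, hdb]; ring
    have hlb : 1 ≤ x (c • α + d • β) := by
      rcases le_total c d with hcd | hcd
      · have hdec : d • (α + β) = (c • α + d • β) + (d - c) • α := by
          rw [smul_add, sub_smul]; abel
        have h1 : x (d • (α + β)) ≤ x (c • α + d • β) + x ((d - c) • α) := by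
          rw [hdec]; exact map_add_le_add x _ _
        rw [map_smul_eq_mul, map_smul_eq_mul, Real.norm_eq_abs, Real.norm_eq_abs,
          abs_of_nonneg hd0, abs_of_nonneg (by linarith : (0:ℝ) ≤ d - c), h] at h1
        nlinarith [h1, hca, hdb]
      · have hdec : c • (α + β) = (c • α + d • β) + (c - d) • β := by
          rw [smul_add, sub_smul]; abel
        have h1 : x (c • (α + β)) ≤ x (c • α + d • β) + x ((c - d) • β) := by
          rw [hdec]; exact map_add_le_add x _ _
        rw [map_smul_eq_mul, map_smul_eq_mul, Real.norm_eq_abs, Real.norm_eq_abs,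
          abs_of_nonneg hc0, abs_of_nonneg (by linarith : (0:ℝ) ≤ c - d), h] at h1
        nlinarith [h1, hca, hdb]
    linarith
  · intro h
    have hab : (0:ℝ) < x α + x β := add_pos hα hβ
    have hmem : x α / (x α + x β) ∈ Set.Icc (0:ℝ) 1 :=
      ⟨div_nonneg hα.le hab.le, by rw [div_le_one hab]; linarith⟩
    have key := h (x α / (x α + x β)) hmem
    rw [smul_smul, smul_smul] at key
    have e1 : x α / (x α + x β) * (x α)⁻¹ = (x α + x β)⁻¹ := by
      field_simp
    have e2 : (1 - x α / (x α + x β)) * (x β)⁻¹ = (x α + x β)⁻¹ := by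
      field_simp; ring
    rw [e1, e2, ← smul_add, map_smul_eq_mul, Real.norm_eq_abs,
      abs_of_nonneg (inv_nonneg.2 hab.le)] at key
    have : x (α + β) = x α + x β := by
      field_simp at key; linarith
    exact this
end

section
/- Let V be a real vector space, x a seminorm on V, and α, β ∈ V. Then x(α+β) = x(α) + x(β) if and only if there exists a linear functional ℓ : V → ℝ such that ℓ(v) ≤ x(v) for all v ∈ V, ℓ(α) = x(α), and ℓ(β) = x(β). -/
/-- Dual formulation of the additivity lemma: a seminorm is additive at `α` and `β`
if and only if there is a linear functional dominated by `x` attaining `x` at both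
`α` and `β`. -/
theorem seminorm_add_eq_iff_exists_functional
    {V : Type*} [AddCommGroup V] [Module ℝ V] (x : Seminorm ℝ V) (α β : V) :
    x (α + β) = x α + x β ↔
      ∃ ℓ : V →ₗ[ℝ] ℝ, (∀ v : V, ℓ v ≤ x v) ∧ ℓ α = x α ∧ ℓ β = x β := by
  constructor
  · intro h
    have H : ∀ c : ℝ, c • (α + β) = 0 → c • (x (α + β)) = 0 := by
      intro c hc
      rcases eq_or_ne c 0 with rfl | hc0
      · simp
      · have : α + β = 0 := by
          have := congrArg (fun v => c⁻¹ • v) hc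
          simpa [smul_smul, inv_mul_cancel₀ hc0] using this
        simp [this]
    set f := LinearPMap.mkSpanSingleton' (σ := RingHom.id ℝ) (α + β) (x (α + β)) H with hf
    obtain ⟨g, hg1, hg2⟩ := exists_extension_of_le_sublinear f (fun v => x v)
      (fun c hc v => by
        show x (c • v) = c * x v
        rw [map_smul_eq_mul, Real.norm_eq_abs, abs_of_pos hc])
      (fun u v => map_add_le_add x u v)
      (by
        rintro ⟨z, hz⟩
        rw [LinearPMap.domain_mkSpanSingleton] at hz
        obtain ⟨c, rfl⟩ := Submodule.mem_span_singleton.mp hz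
        rw [LinearPMap.mkSpanSingleton'_apply]
        calc c • x (α + β) ≤ |c| * x (α + β) := by
              rw [smul_eq_mul]
              exact mul_le_mul_of_nonneg_right (le_abs_self c) (apply_nonneg x _)
          _ = x (c • (α + β)) := by
              rw [map_smul_eq_mul, Real.norm_eq_abs])
    have hsum : g (α + β) = x (α + β) := by
      have hmem : α + β ∈ f.domain := by
        rw [hf, LinearPMap.domain_mkSpanSingleton]
        exact Submodule.mem_span_singleton_self _
      have := hg1 ⟨α + β, hmem⟩
      rw [this]
      exact LinearPMap.mkSpanSingleton'_apply_self (α + β) (x (α + β)) H hmem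
    refine ⟨g, hg2, ?_, ?_⟩
    · have hga : g α ≤ x α := hg2 α
      have hgb : g β ≤ x β := hg2 β
      have : g α + g β = x α + x β := by rw [← map_add, hsum, h]
      linarith
    · have hga : g α ≤ x α := hg2 α
      have hgb : g β ≤ x β := hg2 β
      have : g α + g β = x α + x β := by rw [← map_add, hsum, h]
      linarith
  · rintro ⟨ℓ, hle, ha, hb⟩
    have h1 : x α + x β = ℓ (α + β) := by rw [map_add, ha, hb]
    have h2 : ℓ (α + β) ≤ x (α + β) := hle _
    have h3 : x (α + β) ≤ x α + x β := map_add_le_add x α β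
    linarith
end

section
/- Fix integers a, b, c with a ≤ −2, b ≥ 1, c ≥ 1. Work in ℝ³ with the standard dot product and set γ₁ := (b+c−1, −a−c−1, 1+a−b), γ₂ := (b+c−1, 1+a−c, −a−b−1), γ₃ := (1−b−c, −a+c−3, 1+a+b), γ₄ := (1−b−c, 1+a+c, −a+b−3), and B := {v ∈ ℝ³ : |γᵢ · v| ≤ 1 for i = 1,2,3,4}. Let w₁ := (b+c−1)⁻¹ · (1, 0, 0), w₂ := ((−a−1)(b+c−1))⁻¹ · (c, b+c−1, 0), w₃ := ((−a−1)(b+c−1))⁻¹ · (b, 0, b+c−1), and w₄ := (1, 1, 1). Then B equals the convex hull of the eight points {w₁, −w₁, w₂, −w₂, w₃, −w₃, w₄, −w₄}; in particular B is a bounded convex polytope with these points as its vertices. -/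
open Matrix

private lemma pp_absmin_aux (A x y s t : ℝ) (hA : 1 ≤ A)
    (hx : |x| ≤ 1) (hy : |y| ≤ 1) (hs : |s| ≤ 1) (ht : |t| ≤ 1)
    (hrel : A * (t - s) = (A - 1) * (x - y)) (hd : 0 ≤ x - y) :
    ∃ β : ℝ, |(s + x) / 2 - β / A| + |β| + |β - (x - y) / 2| + |(s - y) / 2 - β / A| ≤ 1 := by
  have hApos : (0:ℝ) < A := by linarith
  have hA0 : A ≠ 0 := ne_of_gt hApos
  obtain ⟨hx1, hx2⟩ := abs_le.mp hx
  obtain ⟨hy1, hy2⟩ := abs_le.mp hy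
  obtain ⟨hs1, hs2⟩ := abs_le.mp hs
  obtain ⟨ht1, ht2⟩ := abs_le.mp ht
  by_cases hsx : 0 ≤ s + x
  · by_cases hsy : 0 ≤ s - y
    · -- both nonneg : go to t-cases
      -- identities for β = (x-y)/2
      have k1 : (s + x) / 2 - ((x - y)/2) / A = (t + y) / 2 := by
        field_simp
        linear_combination (-1 : ℝ) * hrel
      have k2 : (s - y) / 2 - ((x - y)/2) / A = (t - x) / 2 := by
        field_simp
        linear_combination (-1 : ℝ) * hrel
      by_cases hty : 0 ≤ t + y
      · by_cases htx : 0 ≤ t - x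
        · refine ⟨(x - y)/2, ?_⟩
          rw [k1, k2, sub_self, abs_zero,
            abs_of_nonneg (by linarith : (0:ℝ) ≤ (x - y)/2),
            abs_of_nonneg (by linarith : (0:ℝ) ≤ (t + y)/2),
            abs_of_nonneg (by linarith : (0:ℝ) ≤ (t - x)/2)]
          linarith
        · push_neg at htx
          by_cases hty2 : 0 ≤ t + y
          · -- case: sum = x
            refine ⟨(x - y)/2, ?_⟩
            rw [k1, k2, sub_self, abs_zero,
              abs_of_nonneg (by linarith : (0:ℝ) ≤ (x - y)/2),
              abs_of_nonneg (by linarith : (0:ℝ) ≤ (t + y)/2),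
              abs_of_nonpos (by linarith : (t - x)/2 ≤ 0)]
            linarith
          · -- s+x ≥ 0, t+y < 0 : β = A*(s+x)/2
            push_neg at hty2
            refine ⟨A * (s + x) / 2, ?_⟩
            have e0 : (s + x) / 2 - (A * (s + x) / 2) / A = 0 := by field_simp; ring
            have e1 : A * (s + x) / 2 - (x - y) / 2 = A * (t + y) / 2 := by
              linear_combination ((-1:ℝ)/2) * hrel
            have e2 : (s - y) / 2 - (A * (s + x) / 2) / A = -((x + y)/2) := by
              field_simp
              ring
            have key : A * (s + x) / 2 - A * (t + y) / 2 = (x - y) / 2 := by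
              linear_combination ((-1:ℝ)/2) * hrel
            have hbp : (0:ℝ) ≤ A * (s + x) / 2 :=
              div_nonneg (mul_nonneg hApos.le hsx) (by norm_num)
            have hbn : A * (t + y) / 2 ≤ 0 := by
              have : A * (t + y) ≤ 0 := mul_nonpos_iff.mpr (Or.inl ⟨hApos.le, hty2.le⟩)
              linarith
            rw [e0, e1, e2, abs_zero, abs_neg, abs_of_nonneg hbp, abs_of_nonpos hbn]
            rcases abs_cases ((x + y)/2) with ⟨e, _⟩ | ⟨e, _⟩ <;> rw [e] <;> linarith
      · push_neg at hty
        by_cases htx : 0 ≤ t - x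
        · -- sum = -y
          refine ⟨(x - y)/2, ?_⟩
          rw [k1, k2, sub_self, abs_zero,
            abs_of_nonneg (by linarith : (0:ℝ) ≤ (x - y)/2),
            abs_of_nonpos (by linarith : (t + y)/2 ≤ 0),
            abs_of_nonneg (by linarith : (0:ℝ) ≤ (t - x)/2)]
          linarith
        · -- t+y<0, t-x<0, s+x ≥ 0 : β = A*(s+x)/2
          refine ⟨A * (s + x) / 2, ?_⟩
          have e0 : (s + x) / 2 - (A * (s + x) / 2) / A = 0 := by field_simp; ring
          have e1 : A * (s + x) / 2 - (x - y) / 2 = A * (t + y) / 2 := by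
            linear_combination ((-1:ℝ)/2) * hrel
          have e2 : (s - y) / 2 - (A * (s + x) / 2) / A = -((x + y)/2) := by
            field_simp
            ring
          have key : A * (s + x) / 2 - A * (t + y) / 2 = (x - y) / 2 := by
            linear_combination ((-1:ℝ)/2) * hrel
          have hbp : (0:ℝ) ≤ A * (s + x) / 2 :=
            div_nonneg (mul_nonneg hApos.le hsx) (by norm_num)
          have hbn : A * (t + y) / 2 ≤ 0 := by
            have : A * (t + y) ≤ 0 := mul_nonpos_iff.mpr (Or.inl ⟨hApos.le, hty.le⟩)
            linarith
          rw [e0, e1, e2, abs_zero, abs_neg, abs_of_nonneg hbp, abs_of_nonpos hbn]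
          rcases abs_cases ((x + y)/2) with ⟨e, _⟩ | ⟨e, _⟩ <;> rw [e] <;> linarith
    · -- s+x ≥ 0, s-y ≤ 0 : β = 0, sum = x
      push_neg at hsy
      refine ⟨0, ?_⟩
      rw [zero_div, sub_zero, sub_zero, abs_zero, zero_sub, abs_neg]
      rw [abs_of_nonneg (by linarith : (0:ℝ) ≤ (s + x)/2),
        abs_of_nonneg (by linarith : (0:ℝ) ≤ (x - y)/2),
        abs_of_nonpos (by linarith : (s - y)/2 ≤ 0)]
      linarith
  · push_neg at hsx
    by_cases hsy : 0 ≤ s - y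
    · -- β = 0, sum = -y
      refine ⟨0, ?_⟩
      rw [zero_div, sub_zero, sub_zero, abs_zero, zero_sub, abs_neg]
      rw [abs_of_nonpos (by linarith : (s + x)/2 ≤ 0),
        abs_of_nonneg (by linarith : (0:ℝ) ≤ (x - y)/2),
        abs_of_nonneg (by linarith : (0:ℝ) ≤ (s - y)/2)]
      linarith
    · -- β = 0, sum = -s
      push_neg at hsy
      refine ⟨0, ?_⟩
      rw [zero_div, sub_zero, sub_zero, abs_zero, zero_sub, abs_neg]
      rw [abs_of_nonpos (by linarith : (s + x)/2 ≤ 0),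
        abs_of_nonneg (by linarith : (0:ℝ) ≤ (x - y)/2),
        abs_of_nonpos (by linarith : (s - y)/2 ≤ 0)]
      linarith

private lemma pp_absmin (A x y s t : ℝ) (hA : 1 ≤ A)
    (hx : |x| ≤ 1) (hy : |y| ≤ 1) (hs : |s| ≤ 1) (ht : |t| ≤ 1)
    (hrel : A * (t - s) = (A - 1) * (x - y)) :
    ∃ β : ℝ, |(s + x) / 2 - β / A| + |β| + |β - (x - y) / 2| + |(s - y) / 2 - β / A| ≤ 1 := by
  rcases le_total y x with h | h
  · exact pp_absmin_aux A x y s t hA hx hy hs ht hrel (by linarith)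
  · obtain ⟨β, hβ⟩ := pp_absmin_aux A (-x) (-y) (-s) (-t) hA (by rwa [abs_neg]) (by rwa [abs_neg])
      (by rwa [abs_neg]) (by rwa [abs_neg]) (by linear_combination -hrel) (by linarith)
    refine ⟨-β, ?_⟩
    have e1 : (s + x) / 2 - (-β) / A = -((-s + -x) / 2 - β / A) := by ring
    have e3 : -β - (x - y) / 2 = -(β - (-x - -y) / 2) := by ring
    have e4 : (s - y) / 2 - (-β) / A = -((-s - -y) / 2 - β / A) := by ring
    rw [e1, e3, e4, abs_neg, abs_neg, abs_neg, abs_neg]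
    exact hβ

private lemma pp_hull_mem (p₁ p₂ p₃ p₄ : Fin 3 → ℝ) (c₁ c₂ c₃ c₄ : ℝ)
    (h : |c₁| + |c₂| + |c₃| + |c₄| ≤ 1) :
    c₁ • p₁ + c₂ • p₂ + c₃ • p₃ + c₄ • p₄ ∈
      convexHull ℝ ({p₁, -p₁, p₂, -p₂, p₃, -p₃, p₄, -p₄} : Set (Fin 3 → ℝ)) := by
  set K := convexHull ℝ ({p₁, -p₁, p₂, -p₂, p₃, -p₃, p₄, -p₄} : Set (Fin 3 → ℝ)) with hK
  have hconv : Convex ℝ K := convex_convexHull ℝ _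
  have hmem : ∀ q ∈ ({p₁, -p₁, p₂, -p₂, p₃, -p₃, p₄, -p₄} : Set (Fin 3 → ℝ)), q ∈ K :=
    fun q hq => subset_convexHull ℝ _ hq
  have key : ∀ (cc : ℝ) (p : Fin 3 → ℝ), ∃ q, (q = p ∨ q = -p) ∧ |cc| • q = cc • p := by
    intro cc p
    rcases le_or_gt 0 cc with hcc | hcc
    · exact ⟨p, Or.inl rfl, by rw [abs_of_nonneg hcc]⟩
    · exact ⟨-p, Or.inr rfl, by rw [abs_of_neg hcc, neg_smul, smul_neg, neg_neg]⟩
  obtain ⟨q₁, hq₁, e₁⟩ := key c₁ p₁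
  obtain ⟨q₂, hq₂, e₂⟩ := key c₂ p₂
  obtain ⟨q₃, hq₃, e₃⟩ := key c₃ p₃
  obtain ⟨q₄, hq₄, e₄⟩ := key c₄ p₄
  have hq₁K : q₁ ∈ K := hmem q₁ (by rcases hq₁ with rfl | rfl <;> simp)
  have hq₂K : q₂ ∈ K := hmem q₂ (by rcases hq₂ with rfl | rfl <;> simp)
  have hq₃K : q₃ ∈ K := hmem q₃ (by rcases hq₃ with rfl | rfl <;> simp)
  have hq₄K : q₄ ∈ K := hmem q₄ (by rcases hq₄ with rfl | rfl <;> simp)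
  have h0 : (0 : Fin 3 → ℝ) ∈ K := by
    have := hconv (hmem p₁ (by simp)) (hmem (-p₁) (by simp))
      (by norm_num : (0:ℝ) ≤ 1/2) (by norm_num : (0:ℝ) ≤ 1/2) (by norm_num : (1:ℝ)/2 + 1/2 = 1)
    simpa using this
  have hsum := hconv.sum_mem (t := (Finset.univ : Finset (Fin 5)))
    (w := ![|c₁|, |c₂|, |c₃|, |c₄|, 1 - (|c₁| + |c₂| + |c₃| + |c₄|)])
    (z := ![q₁, q₂, q₃, q₄, 0])
    (by
      intro i _
      fin_cases i <;> simp
      · linarith)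
    (by simp [Fin.sum_univ_five])
    (by
      intro i _
      fin_cases i <;> simp [hq₁K, hq₂K, hq₃K, hq₄K, h0])
  rw [Fin.sum_univ_five] at hsum
  simp only [Matrix.cons_val_zero, Matrix.cons_val_one, Matrix.head_cons,
    Matrix.cons_val_two, Matrix.tail_cons, Matrix.cons_val_three, Matrix.cons_val_four,
    smul_zero, add_zero] at hsum
  rwa [e₁, e₂, e₃, e₄] at hsum

private lemma pp_exposed_extreme (Bs : Set (Fin 3 → ℝ)) (f p : Fin 3 → ℝ) (m : ℝ)
    (hp : p ∈ Bs) (heq : f ⬝ᵥ p = m) (hmax : ∀ z ∈ Bs, f ⬝ᵥ z ≤ m)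
    (huniq : ∀ z ∈ Bs, f ⬝ᵥ z = m → z = p) :
    p ∈ Set.extremePoints ℝ Bs := by
  refine ⟨hp, fun z₁ hz₁ z₂ hz₂ hseg => ?_⟩
  obtain ⟨u, w, hu, hw, huw, hcomb⟩ := hseg
  have hfc : u * (f ⬝ᵥ z₁) + w * (f ⬝ᵥ z₂) = m := by
    rw [← heq, ← hcomb]
    simp [dotProduct_add, dotProduct_smul, smul_eq_mul]
  have h₁ : f ⬝ᵥ z₁ = m := by
    by_contra hne
    have hlt : f ⬝ᵥ z₁ < m := lt_of_le_of_ne (hmax z₁ hz₁) hne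
    have h1 := mul_lt_mul_of_pos_left hlt hu
    have h2 := mul_le_mul_of_nonneg_left (hmax z₂ hz₂) hw.le
    have h3 : u * m + w * m = m := by rw [← add_mul, huw, one_mul]
    linarith
  have h₂ : f ⬝ᵥ z₂ = m := by
    by_contra hne
    have hlt : f ⬝ᵥ z₂ < m := lt_of_le_of_ne (hmax z₂ hz₂) hne
    have h1 := mul_lt_mul_of_pos_left hlt hw
    have h2 := mul_le_mul_of_nonneg_left (hmax z₁ hz₁) hu.le
    have h3 : u * m + w * m = m := by rw [← add_mul, huw, one_mul]
    linarith
  exact huniq z₁ hz₁ h₁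

private lemma pp_extreme_neg (Bs : Set (Fin 3 → ℝ)) (hsym : ∀ z ∈ Bs, -z ∈ Bs)
    (p : Fin 3 → ℝ) (hp : p ∈ Set.extremePoints ℝ Bs) :
    -p ∈ Set.extremePoints ℝ Bs := by
  refine ⟨hsym p hp.1, fun z₁ hz₁ z₂ hz₂ hseg => ?_⟩
  obtain ⟨u, w, hu, hw, huw, hcomb⟩ := hseg
  have hseg' : p ∈ openSegment ℝ (-z₁) (-z₂) :=
    ⟨u, w, hu, hw, huw, by rw [smul_neg, smul_neg, ← neg_add, hcomb, neg_neg]⟩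
  have h := hp.2 (hsym z₁ hz₁) (hsym z₂ hz₂) hseg'
  rw [← h, neg_neg]

private lemma pp_inj (a b c : ℤ) (ha : a ≤ -2) (hb : 1 ≤ b) (hc : 1 ≤ c)
    (z p : Fin 3 → ℝ)
    (h1 : ![(b : ℝ) + c - 1, -(a : ℝ) - c - 1, 1 + (a : ℝ) - b] ⬝ᵥ z
        = ![(b : ℝ) + c - 1, -(a : ℝ) - c - 1, 1 + (a : ℝ) - b] ⬝ᵥ p)
    (h2 : ![(b : ℝ) + c - 1, 1 + (a : ℝ) - c, -(a : ℝ) - b - 1] ⬝ᵥ z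
        = ![(b : ℝ) + c - 1, 1 + (a : ℝ) - c, -(a : ℝ) - b - 1] ⬝ᵥ p)
    (h3 : ![1 - (b : ℝ) - c, -(a : ℝ) + c - 3, 1 + (a : ℝ) + b] ⬝ᵥ z
        = ![1 - (b : ℝ) - c, -(a : ℝ) + c - 3, 1 + (a : ℝ) + b] ⬝ᵥ p) :
    z = p := by
  have haR : (a : ℝ) ≤ -2 := by exact_mod_cast ha
  have hbR : (1 : ℝ) ≤ b := by exact_mod_cast hb
  have hcR : (1 : ℝ) ≤ c := by exact_mod_cast hc
  have hA0 : (-(a : ℝ) - 1) ≠ 0 := by intro h; linarith [h]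
  have hS0 : ((b : ℝ) + c - 1) ≠ 0 := by intro h; linarith [h]
  simp only [dotProduct, Fin.sum_univ_three, Matrix.cons_val_zero, Matrix.cons_val_one,
    Matrix.head_cons, Matrix.cons_val_two, Matrix.tail_cons] at h1 h2 h3
  have e1 : z 1 = p 1 := by linear_combination (-(1:ℝ)/2) * h2 + (-(1:ℝ)/2) * h3
  have e2 : z 2 = p 2 := by
    refine mul_left_cancel₀ hA0 ?_
    linear_combination ((1:ℝ)/2) * h2 - ((1:ℝ)/2) * h1 + (-(a:ℝ) - 1) * e1
  have e0 : z 0 = p 0 := by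
    refine mul_left_cancel₀ hS0 ?_
    linear_combination h1 - (-(a:ℝ) - c - 1) * e1 - (1 + (a:ℝ) - b) * e2
  funext i
  fin_cases i
  · exact e0
  · exact e1
  · exact e2

private lemma pp_slab (g u v : Fin 3 → ℝ) (pa qa : ℝ) (hpa : 0 ≤ pa) (hqa : 0 ≤ qa)
    (hpq : pa + qa = 1) (hu : |g ⬝ᵥ u| ≤ 1) (hv : |g ⬝ᵥ v| ≤ 1) :
    |g ⬝ᵥ (pa • u + qa • v)| ≤ 1 := by
  rw [dotProduct_add, dotProduct_smul, dotProduct_smul, smul_eq_mul, smul_eq_mul]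
  calc |pa * (g ⬝ᵥ u) + qa * (g ⬝ᵥ v)| ≤ |pa * (g ⬝ᵥ u)| + |qa * (g ⬝ᵥ v)| := abs_add_le _ _
    _ = pa * |g ⬝ᵥ u| + qa * |g ⬝ᵥ v| := by
        rw [abs_mul, abs_mul, abs_of_nonneg hpa, abs_of_nonneg hqa]
    _ ≤ pa * 1 + qa * 1 :=
        add_le_add (mul_le_mul_of_nonneg_left hu hpa) (mul_le_mul_of_nonneg_left hv hqa)
    _ = 1 := by rw [mul_one, mul_one, hpq]
set_option maxHeartbeats 1000000 in
/-- For the pretzel link `P(2a,2b,2c)` with `a ≤ -2`, `b, c ≥ 1`: the polyhedron `B`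
cut out by Thurston's inequality applied to the four Euler classes `γ₁, γ₂, γ₃, γ₄`
is the convex polytope with the eight vertices `±w₁, ±w₂, ±w₃, ±w₄`. -/
theorem pretzel_polyhedron_eq_convexHull
    (a b c : ℤ) (ha : a ≤ -2) (hb : 1 ≤ b) (hc : 1 ≤ c)
    (γ₁ γ₂ γ₃ γ₄ w₁ w₂ w₃ w₄ : Fin 3 → ℝ)
    (hγ₁ : γ₁ = ![(b : ℝ) + c - 1, -(a : ℝ) - c - 1, 1 + (a : ℝ) - b])
    (hγ₂ : γ₂ = ![(b : ℝ) + c - 1, 1 + (a : ℝ) - c, -(a : ℝ) - b - 1])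
    (hγ₃ : γ₃ = ![1 - (b : ℝ) - c, -(a : ℝ) + c - 3, 1 + (a : ℝ) + b])
    (hγ₄ : γ₄ = ![1 - (b : ℝ) - c, 1 + (a : ℝ) + c, -(a : ℝ) + b - 3])
    (hw₁ : w₁ = ((b : ℝ) + c - 1)⁻¹ • ![(1 : ℝ), 0, 0])
    (hw₂ : w₂ = ((-(a : ℝ) - 1) * ((b : ℝ) + c - 1))⁻¹ • ![(c : ℝ), (b : ℝ) + c - 1, 0])
    (hw₃ : w₃ = ((-(a : ℝ) - 1) * ((b : ℝ) + c - 1))⁻¹ • ![(b : ℝ), 0, (b : ℝ) + c - 1])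
    (hw₄ : w₄ = ![(1 : ℝ), 1, 1])
    (B : Set (Fin 3 → ℝ))
    (hB : B = {v : Fin 3 → ℝ |
      |γ₁ ⬝ᵥ v| ≤ 1 ∧ |γ₂ ⬝ᵥ v| ≤ 1 ∧ |γ₃ ⬝ᵥ v| ≤ 1 ∧ |γ₄ ⬝ᵥ v| ≤ 1}) :
    B = convexHull ℝ ({w₁, -w₁, w₂, -w₂, w₃, -w₃, w₄, -w₄} : Set (Fin 3 → ℝ)) ∧
      Convex ℝ B ∧ Bornology.IsBounded B ∧
      Set.extremePoints ℝ B = ({w₁, -w₁, w₂, -w₂, w₃, -w₃, w₄, -w₄} : Set (Fin 3 → ℝ)) := by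
  have haR : (a : ℝ) ≤ -2 := by exact_mod_cast ha
  have hbR : (1 : ℝ) ≤ b := by exact_mod_cast hb
  have hcR : (1 : ℝ) ≤ c := by exact_mod_cast hc
  have hApos : (0:ℝ) < -(a:ℝ) - 1 := by linarith
  have hA0 : (-(a:ℝ) - 1) ≠ 0 := ne_of_gt hApos
  have hA1 : (1:ℝ) ≤ -(a:ℝ) - 1 := by linarith
  have hSpos : (0:ℝ) < (b:ℝ) + c - 1 := by linarith
  have hS0 : ((b:ℝ) + c - 1) ≠ 0 := ne_of_gt hSpos
  -- the sixteen dot products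
  have d11 : γ₁ ⬝ᵥ w₁ = 1 := by
    rw [hγ₁, hw₁]; simp [dotProduct, Fin.sum_univ_three]; field_simp
  have d21 : γ₂ ⬝ᵥ w₁ = 1 := by
    rw [hγ₂, hw₁]; simp [dotProduct, Fin.sum_univ_three]; field_simp
  have d31 : γ₃ ⬝ᵥ w₁ = -1 := by
    rw [hγ₃, hw₁]; simp [dotProduct, Fin.sum_univ_three]; field_simp; ring
  have d41 : γ₄ ⬝ᵥ w₁ = -1 := by
    rw [hγ₄, hw₁]; simp [dotProduct, Fin.sum_univ_three]; field_simp; ring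
  have d12 : γ₁ ⬝ᵥ w₂ = 1 := by
    rw [hγ₁, hw₂]; simp [dotProduct, Fin.sum_univ_three]; field_simp; ring
  have d22 : γ₂ ⬝ᵥ w₂ = -1 := by
    rw [hγ₂, hw₂]; simp [dotProduct, Fin.sum_univ_three]; field_simp; ring
  have d32 : γ₃ ⬝ᵥ w₂ = (-(a:ℝ) - 3) / (-(a:ℝ) - 1) := by
    rw [hγ₃, hw₂]; simp [dotProduct, Fin.sum_univ_three]; field_simp; ring
  have d42 : γ₄ ⬝ᵥ w₂ = -1 := by
    rw [hγ₄, hw₂]; simp [dotProduct, Fin.sum_univ_three]; field_simp; ring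
  have d13 : γ₁ ⬝ᵥ w₃ = -1 := by
    rw [hγ₁, hw₃]; simp [dotProduct, Fin.sum_univ_three]; field_simp; ring
  have d23 : γ₂ ⬝ᵥ w₃ = 1 := by
    rw [hγ₂, hw₃]; simp [dotProduct, Fin.sum_univ_three]; field_simp; ring
  have d33 : γ₃ ⬝ᵥ w₃ = -1 := by
    rw [hγ₃, hw₃]; simp [dotProduct, Fin.sum_univ_three]; field_simp; ring
  have d43 : γ₄ ⬝ᵥ w₃ = (-(a:ℝ) - 3) / (-(a:ℝ) - 1) := by
    rw [hγ₄, hw₃]; simp [dotProduct, Fin.sum_univ_three]; field_simp; ring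
  have d14 : γ₁ ⬝ᵥ w₄ = -1 := by
    rw [hγ₁, hw₄]; simp [dotProduct, Fin.sum_univ_three]; ring
  have d24 : γ₂ ⬝ᵥ w₄ = -1 := by
    rw [hγ₂, hw₄]; simp [dotProduct, Fin.sum_univ_three]; ring
  have d34 : γ₃ ⬝ᵥ w₄ = -1 := by
    rw [hγ₃, hw₄]; simp [dotProduct, Fin.sum_univ_three]; ring
  have d44 : γ₄ ⬝ᵥ w₄ = -1 := by
    rw [hγ₄, hw₄]; simp [dotProduct, Fin.sum_univ_three]; ring
  have habs_frac : |(-(a:ℝ) - 3) / (-(a:ℝ) - 1)| ≤ 1 := by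
    rw [abs_div, abs_of_pos hApos, div_le_one hApos, abs_le]
    constructor <;> linarith
  have hmemB : ∀ u : Fin 3 → ℝ, u ∈ B ↔
      (|γ₁ ⬝ᵥ u| ≤ 1 ∧ |γ₂ ⬝ᵥ u| ≤ 1 ∧ |γ₃ ⬝ᵥ u| ≤ 1 ∧ |γ₄ ⬝ᵥ u| ≤ 1) := by
    intro u; rw [hB]; exact Iff.rfl
  have hneg : ∀ u ∈ B, -u ∈ B := by
    intro u hu
    rw [hmemB] at hu
    rw [hmemB]
    simpa only [dotProduct_neg, abs_neg] using hu
  have hw₁B : w₁ ∈ B := (hmemB w₁).mpr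
    ⟨by rw [d11]; norm_num, by rw [d21]; norm_num, by rw [d31]; norm_num, by rw [d41]; norm_num⟩
  have hw₂B : w₂ ∈ B := (hmemB w₂).mpr
    ⟨by rw [d12]; norm_num, by rw [d22]; norm_num, by rw [d32]; exact habs_frac,
      by rw [d42]; norm_num⟩
  have hw₃B : w₃ ∈ B := (hmemB w₃).mpr
    ⟨by rw [d13]; norm_num, by rw [d23]; norm_num, by rw [d33]; norm_num,
      by rw [d43]; exact habs_frac⟩
  have hw₄B : w₄ ∈ B := (hmemB w₄).mpr
    ⟨by rw [d14]; norm_num, by rw [d24]; norm_num, by rw [d34]; norm_num, by rw [d44]; norm_num⟩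
  have hBconv : Convex ℝ B := by
    rw [hB]
    intro u hu v hv pa qa hpa hqa hpq
    simp only [Set.mem_setOf_eq] at hu hv ⊢
    exact ⟨pp_slab γ₁ u v pa qa hpa hqa hpq hu.1 hv.1,
      pp_slab γ₂ u v pa qa hpa hqa hpq hu.2.1 hv.2.1,
      pp_slab γ₃ u v pa qa hpa hqa hpq hu.2.2.1 hv.2.2.1,
      pp_slab γ₄ u v pa qa hpa hqa hpq hu.2.2.2 hv.2.2.2⟩
  have hvertsub : ({w₁, -w₁, w₂, -w₂, w₃, -w₃, w₄, -w₄} : Set (Fin 3 → ℝ)) ⊆ B := by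
    intro q hq
    simp only [Set.mem_insert_iff, Set.mem_singleton_iff] at hq
    rcases hq with rfl | rfl | rfl | rfl | rfl | rfl | rfl | rfl
    exacts [hw₁B, hneg _ hw₁B, hw₂B, hneg _ hw₂B, hw₃B, hneg _ hw₃B, hw₄B, hneg _ hw₄B]
  have hsub1 : convexHull ℝ ({w₁, -w₁, w₂, -w₂, w₃, -w₃, w₄, -w₄} : Set (Fin 3 → ℝ)) ⊆ B :=
    convexHull_min hvertsub hBconv
  have hrelz : ∀ u : Fin 3 → ℝ, (-(a:ℝ)-1) * ((γ₃ ⬝ᵥ u) - (γ₄ ⬝ᵥ u))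
      = ((-(a:ℝ)-1) - 1) * ((γ₁ ⬝ᵥ u) - (γ₂ ⬝ᵥ u)) := by
    intro u
    rw [hγ₁, hγ₂, hγ₃, hγ₄]
    simp [dotProduct, Fin.sum_univ_three]
    ring
  have hsub2 : B ⊆ convexHull ℝ ({w₁, -w₁, w₂, -w₂, w₃, -w₃, w₄, -w₄} : Set (Fin 3 → ℝ)) := by
    intro v hv
    obtain ⟨h1, h2, h3, h4⟩ := (hmemB v).mp hv
    obtain ⟨β, hβ⟩ := pp_absmin (-(a:ℝ)-1) (γ₁ ⬝ᵥ v) (γ₂ ⬝ᵥ v) (-(γ₃ ⬝ᵥ v)) (-(γ₄ ⬝ᵥ v)) hA1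
      h1 h2 (by rwa [abs_neg]) (by rwa [abs_neg]) (by linear_combination hrelz v)
    have hdecomp : v = ((-(γ₃ ⬝ᵥ v) + γ₁ ⬝ᵥ v) / 2 - β / (-(a:ℝ)-1)) • w₁ + β • w₂
        + (β - (γ₁ ⬝ᵥ v - γ₂ ⬝ᵥ v) / 2) • w₃
        + ((-(γ₃ ⬝ᵥ v) - γ₂ ⬝ᵥ v) / 2 - β / (-(a:ℝ)-1)) • w₄ := by
      rw [hγ₁, hγ₂, hγ₃, hw₁, hw₂, hw₃, hw₄]
      funext i
      fin_cases i <;>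
        (simp [dotProduct, Fin.sum_univ_three, Pi.smul_apply, smul_eq_mul]; field_simp; ring)
    rw [hdecomp]
    exact pp_hull_mem w₁ w₂ w₃ w₄ _ _ _ _ hβ
  have heqhull : B = convexHull ℝ ({w₁, -w₁, w₂, -w₂, w₃, -w₃, w₄, -w₄} : Set (Fin 3 → ℝ)) :=
    Set.Subset.antisymm hsub2 hsub1
  have hbdd : Bornology.IsBounded B := by
    rw [heqhull]
    exact (Set.toFinite _).isCompact_convexHull (𝕜 := ℝ) |>.isBounded
  have hsub3 : Set.extremePoints ℝ B ⊆ ({w₁, -w₁, w₂, -w₂, w₃, -w₃, w₄, -w₄} : Set (Fin 3 → ℝ)) := by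
    rw [heqhull]
    exact extremePoints_convexHull_subset
  -- the four exposed vertices
  have hext1 : w₁ ∈ Set.extremePoints ℝ B := by
    refine pp_exposed_extreme B (γ₁ + γ₂ - γ₃ - γ₄) w₁ 4 hw₁B ?_ ?_ ?_
    · simp only [sub_dotProduct, add_dotProduct, d11, d21, d31, d41]; norm_num
    · intro z hz
      obtain ⟨hz1, hz2, hz3, hz4⟩ := (hmemB z).mp hz
      simp only [sub_dotProduct, add_dotProduct]
      linarith [(abs_le.mp hz1).2, (abs_le.mp hz2).2, (abs_le.mp hz3).1, (abs_le.mp hz4).1]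
    · intro z hz hzeq
      obtain ⟨hz1, hz2, hz3, hz4⟩ := (hmemB z).mp hz
      simp only [sub_dotProduct, add_dotProduct] at hzeq
      have e1 : γ₁ ⬝ᵥ z = 1 := by
        linarith [(abs_le.mp hz1).2, (abs_le.mp hz2).2, (abs_le.mp hz3).1, (abs_le.mp hz4).1]
      have e2 : γ₂ ⬝ᵥ z = 1 := by
        linarith [(abs_le.mp hz1).2, (abs_le.mp hz2).2, (abs_le.mp hz3).1, (abs_le.mp hz4).1]
      have e3 : γ₃ ⬝ᵥ z = -1 := by
        linarith [(abs_le.mp hz1).2, (abs_le.mp hz2).2, (abs_le.mp hz3).1, (abs_le.mp hz4).1]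
      exact pp_inj a b c ha hb hc z w₁ (by rw [← hγ₁, e1, d11]) (by rw [← hγ₂, e2, d21])
        (by rw [← hγ₃, e3, d31])
  have hext2 : w₂ ∈ Set.extremePoints ℝ B := by
    refine pp_exposed_extreme B (γ₁ - γ₂ - γ₄) w₂ 3 hw₂B ?_ ?_ ?_
    · simp only [sub_dotProduct, d12, d22, d42]; norm_num
    · intro z hz
      obtain ⟨hz1, hz2, hz3, hz4⟩ := (hmemB z).mp hz
      simp only [sub_dotProduct]
      linarith [(abs_le.mp hz1).2, (abs_le.mp hz2).1, (abs_le.mp hz4).1]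
    · intro z hz hzeq
      obtain ⟨hz1, hz2, hz3, hz4⟩ := (hmemB z).mp hz
      simp only [sub_dotProduct] at hzeq
      have e1 : γ₁ ⬝ᵥ z = 1 := by
        linarith [(abs_le.mp hz1).2, (abs_le.mp hz2).1, (abs_le.mp hz4).1]
      have e2 : γ₂ ⬝ᵥ z = -1 := by
        linarith [(abs_le.mp hz1).2, (abs_le.mp hz2).1, (abs_le.mp hz4).1]
      have e4 : γ₄ ⬝ᵥ z = -1 := by
        linarith [(abs_le.mp hz1).2, (abs_le.mp hz2).1, (abs_le.mp hz4).1]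
      have e3 : γ₃ ⬝ᵥ z = γ₃ ⬝ᵥ w₂ := by
        refine mul_left_cancel₀ hA0 ?_
        have hz' := hrelz z
        rw [e1, e2, e4] at hz'
        have hw' := hrelz w₂
        rw [d12, d22, d42] at hw'
        linarith [hz', hw']
      exact pp_inj a b c ha hb hc z w₂ (by rw [← hγ₁, e1, d12]) (by rw [← hγ₂, e2, d22])
        (by rw [← hγ₃]; exact e3)
  have hext3 : w₃ ∈ Set.extremePoints ℝ B := by
    refine pp_exposed_extreme B (γ₂ - γ₁ - γ₃) w₃ 3 hw₃B ?_ ?_ ?_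
    · simp only [sub_dotProduct, d13, d23, d33]; norm_num
    · intro z hz
      obtain ⟨hz1, hz2, hz3, hz4⟩ := (hmemB z).mp hz
      simp only [sub_dotProduct]
      linarith [(abs_le.mp hz1).1, (abs_le.mp hz2).2, (abs_le.mp hz3).1]
    · intro z hz hzeq
      obtain ⟨hz1, hz2, hz3, hz4⟩ := (hmemB z).mp hz
      simp only [sub_dotProduct] at hzeq
      have e1 : γ₁ ⬝ᵥ z = -1 := by
        linarith [(abs_le.mp hz1).1, (abs_le.mp hz2).2, (abs_le.mp hz3).1]
      have e2 : γ₂ ⬝ᵥ z = 1 := by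
        linarith [(abs_le.mp hz1).1, (abs_le.mp hz2).2, (abs_le.mp hz3).1]
      have e3 : γ₃ ⬝ᵥ z = -1 := by
        linarith [(abs_le.mp hz1).1, (abs_le.mp hz2).2, (abs_le.mp hz3).1]
      exact pp_inj a b c ha hb hc z w₃ (by rw [← hγ₁, e1, d13]) (by rw [← hγ₂, e2, d23])
        (by rw [← hγ₃, e3, d33])
  have hext4 : w₄ ∈ Set.extremePoints ℝ B := by
    refine pp_exposed_extreme B (-γ₁ - γ₂ - γ₃ - γ₄) w₄ 4 hw₄B ?_ ?_ ?_
    · simp only [sub_dotProduct, neg_dotProduct, d14, d24, d34, d44]; norm_num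
    · intro z hz
      obtain ⟨hz1, hz2, hz3, hz4⟩ := (hmemB z).mp hz
      simp only [sub_dotProduct, neg_dotProduct]
      linarith [(abs_le.mp hz1).1, (abs_le.mp hz2).1, (abs_le.mp hz3).1, (abs_le.mp hz4).1]
    · intro z hz hzeq
      obtain ⟨hz1, hz2, hz3, hz4⟩ := (hmemB z).mp hz
      simp only [sub_dotProduct, neg_dotProduct] at hzeq
      have e1 : γ₁ ⬝ᵥ z = -1 := by
        linarith [(abs_le.mp hz1).1, (abs_le.mp hz2).1, (abs_le.mp hz3).1, (abs_le.mp hz4).1]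
      have e2 : γ₂ ⬝ᵥ z = -1 := by
        linarith [(abs_le.mp hz1).1, (abs_le.mp hz2).1, (abs_le.mp hz3).1, (abs_le.mp hz4).1]
      have e3 : γ₃ ⬝ᵥ z = -1 := by
        linarith [(abs_le.mp hz1).1, (abs_le.mp hz2).1, (abs_le.mp hz3).1, (abs_le.mp hz4).1]
      exact pp_inj a b c ha hb hc z w₄ (by rw [← hγ₁, e1, d14]) (by rw [← hγ₂, e2, d24])
        (by rw [← hγ₃, e3, d34])
  have hsup : ({w₁, -w₁, w₂, -w₂, w₃, -w₃, w₄, -w₄} : Set (Fin 3 → ℝ))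
      ⊆ Set.extremePoints ℝ B := by
    intro q hq
    simp only [Set.mem_insert_iff, Set.mem_singleton_iff] at hq
    rcases hq with rfl | rfl | rfl | rfl | rfl | rfl | rfl | rfl
    exacts [hext1, pp_extreme_neg B hneg w₁ hext1, hext2, pp_extreme_neg B hneg w₂ hext2,
      hext3, pp_extreme_neg B hneg w₃ hext3, hext4, pp_extreme_neg B hneg w₄ hext4]
  exact ⟨heqhull, hBconv, hbdd, Set.Subset.antisymm hsub3 hsup⟩
end

section
/- Fix integers a, b, c with a ≤ −2, b ≥ 1, c ≥ 1. Work in ℝ³ with the standard dot product and set γ₁ := (b+c−1, −a−c−1, 1+a−b), γ₂ := (b+c−1, 1+a−c, −a−b−1), γ₃ := (1−b−c, −a+c−3, 1+a+b), γ₄ := (1−b−c, 1+a+c, −a+b−3). Let N be any seminorm on ℝ³ such that: (i) |γᵢ · v| ≤ N(v) for every v ∈ ℝ³ and every i = 1,2,3,4; and (ii) N(1,0,0) ≤ b+c−1, N(c, b+c−1, 0) ≤ (−a−1)(b+c−1), N(b, 0, b+c−1) ≤ (−a−1)(b+c−1), and N(1,1,1) ≤ 1. Then N(v) = max{ |γ₁·v|,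 |γ₂·v|, |γ₃·v|, |γ₄·v| } for every v ∈ ℝ³; in particular {v : N(v) ≤ 1} = {v ∈ ℝ³ : |γᵢ·v| ≤ 1 for i = 1,2,3,4}. -/
open Matrix

/-- Computation of the Thurston norm of the exterior of the pretzel link
`P(2a,2b,2c)` with `a ≤ -2`, `b, c ≥ 1` and `ab + bc + ac ≤ a`, abstracted: any
seminorm `N` on `ℝ³` dominating `|γᵢ · v|` for the four Euler classes and taking
values at most the prescribed ones on the four explicit surface classes equals
`max_i |γᵢ · v|`. -/
theorem pretzel_norm_eq_max
    (a b c : ℤ) (ha : a ≤ -2) (hb : 1 ≤ b) (hc : 1 ≤ c)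
    (γ₁ γ₂ γ₃ γ₄ : Fin 3 → ℝ)
    (hγ₁ : γ₁ = ![(b : ℝ) + c - 1, -(a : ℝ) - c - 1, 1 + (a : ℝ) - b])
    (hγ₂ : γ₂ = ![(b : ℝ) + c - 1, 1 + (a : ℝ) - c, -(a : ℝ) - b - 1])
    (hγ₃ : γ₃ = ![1 - (b : ℝ) - c, -(a : ℝ) + c - 3, 1 + (a : ℝ) + b])
    (hγ₄ : γ₄ = ![1 - (b : ℝ) - c, 1 + (a : ℝ) + c, -(a : ℝ) + b - 3])
    (N : Seminorm ℝ (Fin 3 → ℝ))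
    (hlow₁ : ∀ v : Fin 3 → ℝ, |γ₁ ⬝ᵥ v| ≤ N v)
    (hlow₂ : ∀ v : Fin 3 → ℝ, |γ₂ ⬝ᵥ v| ≤ N v)
    (hlow₃ : ∀ v : Fin 3 → ℝ, |γ₃ ⬝ᵥ v| ≤ N v)
    (hlow₄ : ∀ v : Fin 3 → ℝ, |γ₄ ⬝ᵥ v| ≤ N v)
    (hup₁ : N ![(1 : ℝ), 0, 0] ≤ (b : ℝ) + c - 1)
    (hup₂ : N ![(c : ℝ), (b : ℝ) + c - 1, 0] ≤ (-(a : ℝ) - 1) * ((b : ℝ) + c - 1))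
    (hup₃ : N ![(b : ℝ), 0, (b : ℝ) + c - 1] ≤ (-(a : ℝ) - 1) * ((b : ℝ) + c - 1))
    (hup₄ : N ![(1 : ℝ), 1, 1] ≤ 1) :
    (∀ v : Fin 3 → ℝ,
        N v = max (max |γ₁ ⬝ᵥ v| |γ₂ ⬝ᵥ v|) (max |γ₃ ⬝ᵥ v| |γ₄ ⬝ᵥ v|)) ∧
      {v : Fin 3 → ℝ | N v ≤ 1} =
        {v : Fin 3 → ℝ |
          |γ₁ ⬝ᵥ v| ≤ 1 ∧ |γ₂ ⬝ᵥ v| ≤ 1 ∧ |γ₃ ⬝ᵥ v| ≤ 1 ∧ |γ₄ ⬝ᵥ v| ≤ 1} := by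
  have hb' : (1 : ℝ) ≤ (b : ℝ) := by exact_mod_cast hb
  have hc' : (1 : ℝ) ≤ (c : ℝ) := by exact_mod_cast hc
  have ha' : (a : ℝ) ≤ -2 := by exact_mod_cast ha
  have hS : (0 : ℝ) < (b : ℝ) + c - 1 := by linarith
  have hSne : ((b : ℝ) + c - 1) ≠ 0 := ne_of_gt hS
  -- the generic decomposition bound
  have step : ∀ (p q r t : ℝ) (v : Fin 3 → ℝ),
      v = p • ![(1:ℝ),0,0] + q • ![(c:ℝ), (b:ℝ)+c-1, 0]
        + r • ![(b:ℝ), 0, (b:ℝ)+c-1] + t • ![(1:ℝ),1,1] →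
      N v ≤ |p| * ((b:ℝ)+c-1) + |q| * ((-(a:ℝ)-1) * ((b:ℝ)+c-1))
        + |r| * ((-(a:ℝ)-1) * ((b:ℝ)+c-1)) + |t| := by
    intro p q r t v hv
    have h1 : N v ≤ N (p • ![(1:ℝ),0,0]) + N (q • ![(c:ℝ), (b:ℝ)+c-1, 0])
        + N (r • ![(b:ℝ), 0, (b:ℝ)+c-1]) + N (t • ![(1:ℝ),1,1]) := by
      rw [hv]
      refine le_trans (map_add_le_add N _ _) ?_
      refine add_le_add_left (le_trans (map_add_le_add N _ _) ?_) _
      exact add_le_add_left (map_add_le_add N _ _) _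
    rw [map_smul_eq_mul, map_smul_eq_mul, map_smul_eq_mul, map_smul_eq_mul] at h1
    refine h1.trans ?_
    have h4 : |t| * N ![(1:ℝ),1,1] ≤ |t| := by
      calc |t| * N ![(1:ℝ),1,1] ≤ |t| * 1 :=
        mul_le_mul_of_nonneg_left hup₄ (abs_nonneg t)
      _ = |t| := mul_one _
    exact add_le_add (add_le_add (add_le_add
      (mul_le_mul_of_nonneg_left hup₁ (abs_nonneg p))
      (mul_le_mul_of_nonneg_left hup₂ (abs_nonneg q)))
      (mul_le_mul_of_nonneg_left hup₃ (abs_nonneg r))) h4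
  -- key upper bound for the half-space y ≤ 0
  have half : ∀ x y z : ℝ, y ≤ 0 →
      N ![x,y,z] ≤ max (max |γ₁ ⬝ᵥ ![x,y,z]| |γ₂ ⬝ᵥ ![x,y,z]|)
        (max |γ₃ ⬝ᵥ ![x,y,z]| |γ₄ ⬝ᵥ ![x,y,z]|) := by
    intro x y z hy
    have d1 : γ₁ ⬝ᵥ ![x,y,z]
        = ((b:ℝ)+c-1) * x + (-(a:ℝ)-c-1) * y + (1+(a:ℝ)-b) * z := by
      simp [hγ₁, dotProduct, Fin.sum_univ_three]
    have d2 : γ₂ ⬝ᵥ ![x,y,z]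
        = ((b:ℝ)+c-1) * x + (1+(a:ℝ)-c) * y + (-(a:ℝ)-b-1) * z := by
      simp [hγ₂, dotProduct, Fin.sum_univ_three]
    have d3 : γ₃ ⬝ᵥ ![x,y,z]
        = (1-(b:ℝ)-c) * x + (-(a:ℝ)+c-3) * y + (1+(a:ℝ)+b) * z := by
      simp [hγ₃, dotProduct, Fin.sum_univ_three]
    have d4 : γ₄ ⬝ᵥ ![x,y,z]
        = (1-(b:ℝ)-c) * x + (1+(a:ℝ)+c) * y + (-(a:ℝ)+b-3) * z := by
      simp [hγ₄, dotProduct, Fin.sum_univ_three]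
    rcases le_total 0 z with hz | hz
    · -- case (a): δ = 0
      have hdec : ![x,y,z] = ((((b:ℝ)+c-1) * x - c * y - b * z) / ((b:ℝ)+c-1)) • ![(1:ℝ),0,0]
          + (y / ((b:ℝ)+c-1)) • ![(c:ℝ), (b:ℝ)+c-1, 0]
          + (z / ((b:ℝ)+c-1)) • ![(b:ℝ), 0, (b:ℝ)+c-1] + (0:ℝ) • ![(1:ℝ),1,1] := by
        funext i; fin_cases i <;> simp <;> field_simp <;> ring
      have h1 := step ((((b:ℝ)+c-1) * x - c * y - b * z) / ((b:ℝ)+c-1))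
        (y / ((b:ℝ)+c-1)) (z / ((b:ℝ)+c-1)) 0 _ hdec
      have hqa : |y / ((b:ℝ)+c-1)| = -(y / ((b:ℝ)+c-1)) :=
        abs_of_nonpos (div_nonpos_of_nonpos_of_nonneg hy hS.le)
      have hra : |z / ((b:ℝ)+c-1)| = z / ((b:ℝ)+c-1) :=
        abs_of_nonneg (div_nonneg hz hS.le)
      rcases le_total 0 ((((b:ℝ)+c-1) * x - c * y - b * z) / ((b:ℝ)+c-1)) with hsgn | hsgn
      · have hEq : |(((b:ℝ)+c-1) * x - c * y - b * z) / ((b:ℝ)+c-1)| * ((b:ℝ)+c-1)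
            + |y / ((b:ℝ)+c-1)| * ((-(a:ℝ)-1) * ((b:ℝ)+c-1))
            + |z / ((b:ℝ)+c-1)| * ((-(a:ℝ)-1) * ((b:ℝ)+c-1)) + |(0:ℝ)|
            = γ₂ ⬝ᵥ ![x,y,z] := by
          rw [abs_of_nonneg hsgn, hqa, hra, abs_zero, d2]; field_simp; ring
        exact le_trans (h1.trans hEq.le)
          (le_trans (le_abs_self _) (le_max_of_le_left (le_max_right _ _)))
      · have hEq : |(((b:ℝ)+c-1) * x - c * y - b * z) / ((b:ℝ)+c-1)| * ((b:ℝ)+c-1)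
            + |y / ((b:ℝ)+c-1)| * ((-(a:ℝ)-1) * ((b:ℝ)+c-1))
            + |z / ((b:ℝ)+c-1)| * ((-(a:ℝ)-1) * ((b:ℝ)+c-1)) + |(0:ℝ)|
            = -(γ₁ ⬝ᵥ ![x,y,z]) := by
          rw [abs_of_nonpos hsgn, hqa, hra, abs_zero, d1]; field_simp; ring
        exact le_trans (h1.trans hEq.le)
          (le_trans (neg_le_abs _) (le_max_of_le_left (le_max_left _ _)))
    · rcases le_total z y with hzy | hzy
      · -- case (b): δ = y, q = 0
        have hdec : ![x,y,z]
            = ((((b:ℝ)+c-1) * x - b * (z - y) - ((b:ℝ)+c-1) * y) / ((b:ℝ)+c-1)) • ![(1:ℝ),0,0]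
            + (0:ℝ) • ![(c:ℝ), (b:ℝ)+c-1, 0]
            + ((z - y) / ((b:ℝ)+c-1)) • ![(b:ℝ), 0, (b:ℝ)+c-1]
            + y • ![(1:ℝ),1,1] := by
          funext i; fin_cases i <;> simp <;> field_simp <;> ring
        have h1 := step ((((b:ℝ)+c-1) * x - b * (z - y) - ((b:ℝ)+c-1) * y) / ((b:ℝ)+c-1))
          0 ((z - y) / ((b:ℝ)+c-1)) y _ hdec
        have hra : |(z - y) / ((b:ℝ)+c-1)| = -((z - y) / ((b:ℝ)+c-1)) :=
          abs_of_nonpos (div_nonpos_of_nonpos_of_nonneg (by linarith) hS.le)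
        have hta : |y| = -y := abs_of_nonpos hy
        rcases le_total 0 ((((b:ℝ)+c-1) * x - b * (z - y) - ((b:ℝ)+c-1) * y) / ((b:ℝ)+c-1))
          with hsgn | hsgn
        · have hEq : |(((b:ℝ)+c-1) * x - b * (z - y) - ((b:ℝ)+c-1) * y) / ((b:ℝ)+c-1)|
              * ((b:ℝ)+c-1)
              + |(0:ℝ)| * ((-(a:ℝ)-1) * ((b:ℝ)+c-1))
              + |(z - y) / ((b:ℝ)+c-1)| * ((-(a:ℝ)-1) * ((b:ℝ)+c-1)) + |y|
              = γ₁ ⬝ᵥ ![x,y,z] := by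
            rw [abs_of_nonneg hsgn, hra, hta, abs_zero, d1]; field_simp; ring
          exact le_trans (h1.trans hEq.le)
            (le_trans (le_abs_self _) (le_max_of_le_left (le_max_left _ _)))
        · have hEq : |(((b:ℝ)+c-1) * x - b * (z - y) - ((b:ℝ)+c-1) * y) / ((b:ℝ)+c-1)|
              * ((b:ℝ)+c-1)
              + |(0:ℝ)| * ((-(a:ℝ)-1) * ((b:ℝ)+c-1))
              + |(z - y) / ((b:ℝ)+c-1)| * ((-(a:ℝ)-1) * ((b:ℝ)+c-1)) + |y|
              = γ₃ ⬝ᵥ ![x,y,z] := by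
            rw [abs_of_nonpos hsgn, hra, hta, abs_zero, d3]; field_simp; ring
          exact le_trans (h1.trans hEq.le)
            (le_trans (le_abs_self _) (le_max_of_le_right (le_max_left _ _)))
      · -- case (c): δ = z, r = 0
        have hdec : ![x,y,z]
            = ((((b:ℝ)+c-1) * x - c * (y - z) - ((b:ℝ)+c-1) * z) / ((b:ℝ)+c-1)) • ![(1:ℝ),0,0]
            + ((y - z) / ((b:ℝ)+c-1)) • ![(c:ℝ), (b:ℝ)+c-1, 0]
            + (0:ℝ) • ![(b:ℝ), 0, (b:ℝ)+c-1]
            + z • ![(1:ℝ),1,1] := by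
          funext i; fin_cases i <;> simp <;> field_simp <;> ring
        have h1 := step ((((b:ℝ)+c-1) * x - c * (y - z) - ((b:ℝ)+c-1) * z) / ((b:ℝ)+c-1))
          ((y - z) / ((b:ℝ)+c-1)) 0 z _ hdec
        have hqa : |(y - z) / ((b:ℝ)+c-1)| = -((y - z) / ((b:ℝ)+c-1)) :=
          abs_of_nonpos (div_nonpos_of_nonpos_of_nonneg (by linarith) hS.le)
        have hta : |z| = -z := abs_of_nonpos hz
        rcases le_total 0 ((((b:ℝ)+c-1) * x - c * (y - z) - ((b:ℝ)+c-1) * z) / ((b:ℝ)+c-1))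
          with hsgn | hsgn
        · have hEq : |(((b:ℝ)+c-1) * x - c * (y - z) - ((b:ℝ)+c-1) * z) / ((b:ℝ)+c-1)|
              * ((b:ℝ)+c-1)
              + |(y - z) / ((b:ℝ)+c-1)| * ((-(a:ℝ)-1) * ((b:ℝ)+c-1))
              + |(0:ℝ)| * ((-(a:ℝ)-1) * ((b:ℝ)+c-1)) + |z|
              = γ₂ ⬝ᵥ ![x,y,z] := by
            rw [abs_of_nonneg hsgn, hqa, hta, abs_zero, d2]; field_simp; ring
          exact le_trans (h1.trans hEq.le)
            (le_trans (le_abs_self _) (le_max_of_le_left (le_max_right _ _)))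
        · have hEq : |(((b:ℝ)+c-1) * x - c * (y - z) - ((b:ℝ)+c-1) * z) / ((b:ℝ)+c-1)|
              * ((b:ℝ)+c-1)
              + |(y - z) / ((b:ℝ)+c-1)| * ((-(a:ℝ)-1) * ((b:ℝ)+c-1))
              + |(0:ℝ)| * ((-(a:ℝ)-1) * ((b:ℝ)+c-1)) + |z|
              = γ₄ ⬝ᵥ ![x,y,z] := by
            rw [abs_of_nonpos hsgn, hqa, hta, abs_zero, d4]; field_simp; ring
          exact le_trans (h1.trans hEq.le)
            (le_trans (le_abs_self _) (le_max_of_le_right (le_max_right _ _)))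
  -- upper bound for all v
  have key : ∀ v : Fin 3 → ℝ,
      N v ≤ max (max |γ₁ ⬝ᵥ v| |γ₂ ⬝ᵥ v|) (max |γ₃ ⬝ᵥ v| |γ₄ ⬝ᵥ v|) := by
    intro v
    have hv : v = ![v 0, v 1, v 2] := by funext i; fin_cases i <;> rfl
    rcases le_total (v 1) 0 with hy | hy
    · rw [hv]; exact half (v 0) (v 1) (v 2) hy
    · have h2 := half (-(v 0)) (-(v 1)) (-(v 2)) (by linarith)
      have hneg : ![-(v 0), -(v 1), -(v 2)] = -v := by
        funext i; fin_cases i <;> simp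
      rw [hneg] at h2
      simp only [dotProduct_neg, abs_neg, map_neg_eq_map] at h2
      exact h2
  have main : ∀ v : Fin 3 → ℝ,
      N v = max (max |γ₁ ⬝ᵥ v| |γ₂ ⬝ᵥ v|) (max |γ₃ ⬝ᵥ v| |γ₄ ⬝ᵥ v|) := by
    intro v
    refine le_antisymm (key v) ?_
    exact max_le (max_le (hlow₁ v) (hlow₂ v)) (max_le (hlow₃ v) (hlow₄ v))
  refine ⟨main, ?_⟩
  ext v
  simp only [Set.mem_setOf_eq, main v, max_le_iff]
  tauto
end
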